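/- Let G be a finite group, C a conjugacy class of G with C = C^{-1}, and τ a nontrivial irreducible representation of G whose character χ^τ is real valued. For irreducible characters λ of G set W(λ) = |C|^{1/2} χ^λ(C)/dim(λ), and define L_τ(λ,ρ) = (dim(ρ)/(dim(λ) dim(τ))) · (1/|G|) · Σ_{g ∈ G} χ^λ(g) χ^τ(g) conj(χ^ρ(g)). Then for every irreducible character λ of G: Σ_ρ L_τ(λ,ρ) W(ρ) = (χ^τ(C)/dim(τ)) · W(λ), the sum being over all irreducible characters ρ of G. (In particular, if λ is chosen from the Plancherel measure of G and then ρ is chosen with probability L_τ(λ,ρ), the exchangeable pair (W,W') = (W(λ),W(ρ)) satisfies E(W'|W) = (χ^τ(C)/dim(τ)) W.) -/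

import Mathlib

open scoped BigOperators
open CategoryTheory

/-- `χ : G → ℂ` is an irreducible character of `G`. -/
def IsIrrChar (G : Type) [Group G] (χ : G → ℂ) : Prop :=
  ∃ V : FDRep ℂ G, Simple V ∧ χ = FDRep.character V

/-- `C` is a conjugacy class of `G`. -/
def IsConjClass {G : Type} [Group G] (C : Set G) : Prop :=
  ∃ g : G, C = {h | IsConj g h}

/-- The Markov kernel `L_τ(λ, ρ) = (dim ρ/(dim λ dim τ)) ⬝ (1/|G|) Σ_g λ(g) τ(g) conj(ρ(g))`. -/
noncomputable def Lchain {G : Type} [Group G] [Fintype G] (τ lam ρ : G → ℂ) : ℂ :=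
  ρ 1 / (lam 1 * τ 1) * ((Fintype.card G : ℂ)⁻¹ * ∑ g : G, lam g * τ g * (starRingEnd ℂ) (ρ g))

/-- The character-ratio statistic `W(χ) = |C|^{1/2} χ(C)/dim χ`, evaluated at `c ∈ C`. -/
noncomputable def Wstat {G : Type} [Group G] (C : Set G) (c : G) (χ : G → ℂ) : ℂ :=
  (Real.sqrt (Set.ncard C) : ℂ) * χ c / χ 1


section Aux
open Polynomial Module
open scoped MonoidalCategory



lemma eval_charpoly' {ι : Type} [Fintype ι] [DecidableEq ι] (A : Matrix ι ι ℂ) (μ : ℂ) :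
    A.charpoly.eval μ = (μ • (1 : Matrix ι ι ℂ) - A).det := by
  rw [Matrix.charpoly, ← Polynomial.coe_evalRingHom, RingHom.map_det,
    RingHom.mapMatrix_apply]
  congr 1
  ext i j
  by_cases h : i = j <;>
    simp [h, Matrix.charmatrix_apply, Matrix.one_apply, Matrix.diagonal_apply]

lemma trace_inv_eq_conj {ι : Type} [Fintype ι] [DecidableEq ι] {A B : Matrix ι ι ℂ}
    {n : ℕ} (hn : n ≠ 0) (hAB : A * B = 1) (hA : A ^ n = 1) :
    B.trace = (starRingEnd ℂ) A.trace := by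
  set R := A.charpoly.roots with hR
  have hsp : A.charpoly.Splits := IsAlgClosed.splits _
  have hcard : Multiset.card R = Fintype.card ι := by
    rw [hR, splits_iff_card_roots.mp hsp, Matrix.charpoly_natDegree_eq_dim]
  -- all roots are n-th roots of unity
  have hroot : ∀ μ ∈ R, μ ^ n = 1 := by
    intro μ hμ
    have hr : A.charpoly.IsRoot μ := (mem_roots'.mp hμ).2
    have hdet : (μ • (1 : Matrix ι ι ℂ) - A).det = 0 := by
      rw [← eval_charpoly']; exact hr
    obtain ⟨v, hv0, hv⟩ := Matrix.exists_mulVec_eq_zero_iff.mpr hdet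
    have hAv : A.mulVec v = μ • v := by
      rw [Matrix.sub_mulVec, Matrix.smul_mulVec, Matrix.one_mulVec, sub_eq_zero] at hv
      exact hv.symm
    have hpow : ∀ k : ℕ, (A ^ k).mulVec v = μ ^ k • v := by
      intro k
      induction k with
      | zero => simp [Matrix.one_mulVec]
      | succ k ih =>
          rw [pow_succ, pow_succ, ← Matrix.mulVec_mulVec, hAv, Matrix.mulVec_smul, ih,
            smul_smul, mul_comm]
    have hfinal : v = μ ^ n • v := by
      have := hpow n
      rwa [hA, Matrix.one_mulVec] at this
    obtain ⟨i, hi⟩ := Function.ne_iff.mp hv0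
    have : μ ^ n * v i = 1 * v i := by
      rw [one_mul]; exact (congrFun hfinal i).symm
    exact mul_right_cancel₀ hi this
  have hμ0 : ∀ μ ∈ R, μ ≠ 0 := by
    intro μ hμ h0
    have := hroot μ hμ
    rw [h0, zero_pow hn] at this
    exact zero_ne_one this
  have hconj : ∀ μ ∈ R, (starRingEnd ℂ) μ = μ⁻¹ := by
    intro μ hμ
    have habs : ‖μ‖ = 1 := by
      have h1 : ‖μ‖ ^ n = 1 := by
        rw [← norm_pow, hroot μ hμ, norm_one]
      rcases lt_trichotomy ‖μ‖ 1 with h | h | h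
      · exfalso
        have := pow_lt_one₀ (norm_nonneg μ) h hn
        rw [h1] at this; exact lt_irrefl 1 this
      · exact h
      · exfalso
        have := one_lt_pow₀ h hn
        rw [h1] at this; exact lt_irrefl 1 this
    refine eq_inv_of_mul_eq_one_left ?_
    rw [mul_comm, Complex.mul_conj]
    rw [← Complex.sq_norm, habs]; norm_num
  have hdetA : A.det = R.prod := Matrix.det_eq_prod_roots_charpoly A
  have hdetA0 : A.det ≠ 0 := by
    rw [hdetA]
    exact Multiset.prod_ne_zero (fun h => hμ0 0 h rfl)
  -- the characteristic polynomial of B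
  have key : B.charpoly = (R.map (fun μ : ℂ => X - C μ⁻¹)).prod := by
    apply Polynomial.funext
    intro y
    rw [eval_charpoly', eval_multiset_prod, Multiset.map_map]
    simp only [Function.comp_def, eval_sub, eval_X, eval_C]
    have step1 : A.det * (y • (1 : Matrix ι ι ℂ) - B).det
        = (R.map (fun μ => y * μ - 1)).prod := by
      rw [← Matrix.det_mul, mul_sub, mul_smul_comm, mul_one, hAB]
      by_cases hy : y = 0
      · subst hy
        have h1 : ((0:ℂ) • A - 1) = -(1 : Matrix ι ι ℂ) := by simp
        rw [h1]
        have h2 : (R.map (fun μ => (0:ℂ) * μ - 1)).prod = (-1 : ℂ) ^ Multiset.card R := by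
          have : (R.map (fun μ => (0:ℂ) * μ - 1)) = R.map (fun _ => (-1 : ℂ)) := by
            apply Multiset.map_congr rfl; intro μ _; ring
          rw [this, Multiset.map_const', Multiset.prod_replicate]
        rw [h2, hcard]
        simp [Matrix.det_neg]
      · have hAeq : y • A - 1 = (-y) • (y⁻¹ • (1 : Matrix ι ι ℂ) - A) := by
          rw [smul_sub, smul_smul, neg_mul, mul_inv_cancel₀ hy]
          module
        rw [hAeq, Matrix.det_smul]
        have hch : (y⁻¹ • (1 : Matrix ι ι ℂ) - A).det = (R.map (fun μ => y⁻¹ - μ)).prod := by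
          rw [← eval_charpoly']
          conv_lhs => rw [hsp.eq_prod_roots_of_monic A.charpoly_monic]
          rw [eval_multiset_prod, Multiset.map_map]
          congr 1
          apply Multiset.map_congr rfl
          intro μ _
          simp
        rw [hch, ← hcard]
        have : (-y) ^ Multiset.card R = (R.map (fun _ => -y)).prod := by
          rw [Multiset.map_const', Multiset.prod_replicate]
        rw [this, ← Multiset.prod_map_mul]
        congr 1
        apply Multiset.map_congr rfl
        intro μ _
        field_simp
        ring
    have step2 : A.det * (R.map (fun μ => y - μ⁻¹)).prod
        = (R.map (fun μ => y * μ - 1)).prod := by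
      rw [hdetA]
      conv_lhs => rw [show R.prod = (R.map id).prod by rw [Multiset.map_id]]
      rw [← Multiset.prod_map_mul]
      apply congrArg
      apply Multiset.map_congr rfl
      intro μ hμ
      have := hμ0 μ hμ
      field_simp
      rfl
    exact mul_left_cancel₀ hdetA0 (step1.trans step2.symm)
  have hBtr : B.trace = (R.map (fun μ => μ⁻¹)).sum := by
    rw [Matrix.trace_eq_sum_roots_charpoly, key]
    have : (R.map (fun μ : ℂ => X - C μ⁻¹)).prod
        = ((R.map (fun μ => μ⁻¹)).map (fun a => X - C a)).prod := by
      rw [Multiset.map_map]; rfl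
    rw [this, roots_multiset_prod_X_sub_C]
  rw [hBtr, Matrix.trace_eq_sum_roots_charpoly, ← hR, map_multiset_sum]
  congr 1
  exact (Multiset.map_congr rfl (fun μ h => (hconj μ h).symm))


lemma char_inv {G : Type} [Group G] [Fintype G] (V : FDRep ℂ G) (g : G) :
    V.character g⁻¹ = (starRingEnd ℂ) (V.character g) := by
  classical
  let b := Module.finBasis ℂ V
  have hAB : (LinearMap.toMatrixAlgEquiv b) (V.ρ g) * (LinearMap.toMatrixAlgEquiv b) (V.ρ g⁻¹)
      = 1 := by
    rw [← map_mul, ← map_mul, mul_inv_cancel, map_one, map_one]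
  have hA : (LinearMap.toMatrixAlgEquiv b) (V.ρ g) ^ (Fintype.card G) = 1 := by
    rw [← map_pow, ← map_pow, pow_card_eq_one, map_one, map_one]
  have := trace_inv_eq_conj (n := Fintype.card G) Fintype.card_ne_zero hAB hA
  show LinearMap.trace ℂ V (V.ρ g⁻¹) = (starRingEnd ℂ) (LinearMap.trace ℂ V (V.ρ g))
  rw [LinearMap.trace_eq_matrix_trace ℂ b, LinearMap.trace_eq_matrix_trace ℂ b]
  exact this

/-- The sub-representation on an invariant subspace. -/
def subRep {G V : Type} [Group G] [AddCommGroup V] [Module ℂ V] (ρ : Representation ℂ G V)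
    (p : Submodule ℂ V) (hp : ∀ g : G, ∀ v ∈ p, ρ g v ∈ p) : Representation ℂ G p where
  toFun g := (ρ g).restrict (fun v hv => hp g v hv)
  map_one' := by ext v; simp [LinearMap.restrict_apply]
  map_mul' g h := by ext v; simp [LinearMap.restrict_apply]

lemma subRep_apply {G V : Type} [Group G] [AddCommGroup V] [Module ℂ V]
    (ρ : Representation ℂ G V) (p : Submodule ℂ V) (hp : ∀ g : G, ∀ v ∈ p, ρ g v ∈ p)
    (g : G) (v : p) : (subRep ρ p hp g v : V) = ρ g v := rfl

lemma exists_invariant_compl {G V : Type} [Group G] [Fintype G] [AddCommGroup V] [Module ℂ V]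
    (ρ : Representation ℂ G V) (p : Submodule ℂ V) (hp : ∀ g : G, ∀ v ∈ p, ρ g v ∈ p) :
    ∃ q : Submodule ℂ V, (∀ g : G, ∀ v ∈ q, ρ g v ∈ q) ∧ IsCompl p q := by
  classical
  obtain ⟨q₀, hq₀⟩ := Submodule.exists_isCompl p
  let π₀ : V →ₗ[ℂ] V := p.subtype ∘ₗ (p.projectionOnto q₀ hq₀)
  have hπ₀mem : ∀ v, π₀ v ∈ p := fun v => (p.projectionOnto q₀ hq₀ v).2
  have hπ₀id : ∀ v ∈ p, π₀ v = v := by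
    intro v hv
    show (p.projectionOnto q₀ hq₀ v : V) = v
    rw [show v = ((⟨v, hv⟩ : p) : V) from rfl, Submodule.projectionOnto_apply_left hq₀]
  have hcard : (Fintype.card G : ℂ) ≠ 0 := Nat.cast_ne_zero.mpr Fintype.card_ne_zero
  let e : V →ₗ[ℂ] V := (Fintype.card G : ℂ)⁻¹ • ∑ g : G, (ρ g) ∘ₗ π₀ ∘ₗ (ρ g⁻¹)
  have he_apply : ∀ v, e v = (Fintype.card G : ℂ)⁻¹ • ∑ g : G, ρ g (π₀ (ρ g⁻¹ v)) := by
    intro v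
    simp [e, LinearMap.sum_apply, LinearMap.smul_apply, LinearMap.comp_apply]
  have hemem : ∀ v, e v ∈ p := by
    intro v
    rw [he_apply]
    exact Submodule.smul_mem _ _ (Submodule.sum_mem _ fun g _ => hp g _ (hπ₀mem _))
  have hρρ : ∀ (g : G) (v : V), ρ g (ρ g⁻¹ v) = v := by
    intro g v
    have : (ρ g * ρ g⁻¹) v = v := by rw [← map_mul, mul_inv_cancel, map_one, Module.End.one_apply]
    simpa [Module.End.mul_apply] using this
  have heid : ∀ v ∈ p, e v = v := by
    intro v hv
    rw [he_apply]
    have hterm : ∀ g : G, ρ g (π₀ (ρ g⁻¹ v)) = v := by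
      intro g
      rw [hπ₀id _ (hp g⁻¹ v hv), hρρ]
    rw [Finset.sum_congr rfl (fun g _ => hterm g), Finset.sum_const, Finset.card_univ,
      ← Nat.cast_smul_eq_nsmul ℂ, smul_smul, inv_mul_cancel₀ hcard, one_smul]
  have hcomm : ∀ (h : G) (v : V), e (ρ h v) = ρ h (e v) := by
    intro h v
    rw [he_apply, he_apply, map_smul, map_sum]
    congr 1
    apply Fintype.sum_equiv (Equiv.mulLeft h⁻¹)
    intro g
    have harg : ρ g⁻¹ (ρ h v) = ρ ((h⁻¹ * g)⁻¹) v := by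
      rw [mul_inv_rev, inv_inv, map_mul, Module.End.mul_apply]
    have houter : ∀ w, ρ h (ρ (h⁻¹ * g) w) = ρ g w := by
      intro w
      rw [← Module.End.mul_apply, ← map_mul, mul_inv_cancel_left]
    show ρ g (π₀ (ρ g⁻¹ (ρ h v))) = ρ h (ρ (h⁻¹ * g) (π₀ (ρ (h⁻¹ * g)⁻¹ v)))
    rw [harg, houter]
  let e' : V →ₗ[ℂ] p := LinearMap.codRestrict p e hemem
  have hproj : ∀ x : p, e' x = x := fun x => Subtype.ext (heid x x.2)
  refine ⟨LinearMap.ker e', ?_, LinearMap.isCompl_of_proj hproj⟩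
  intro g v hv
  rw [LinearMap.mem_ker] at hv ⊢
  have hv' : e v = 0 := by
    have := congrArg (Subtype.val) hv
    simpa [e'] using this
  apply Subtype.ext
  show e (ρ g v) = 0
  rw [hcomm, hv', map_zero]



lemma simple_of_irreducible {G V : Type} [Group G] [AddCommGroup V] [Module ℂ V]
    [FiniteDimensional ℂ V] (ρ : Representation ℂ G V) [Nontrivial V]
    (hirr : ∀ p : Submodule ℂ V, (∀ g : G, ∀ v ∈ p, ρ g v ∈ p) → p = ⊥ ∨ p = ⊤) :
    Simple (FDRep.of ρ) := by
  constructor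
  intro Y f hf
  let φ : Y →ₗ[ℂ] V := f.hom.hom.hom
  have hcomm : ∀ (g : G) (y : Y), φ (Y.ρ g y) = ρ g (φ y) := by
    intro g y
    have h := congrArg (fun k => k.hom.hom y) (f.comm g)
    exact h
  constructor
  · intro hiso h0
    obtain ⟨v, hv⟩ := exists_ne (0 : V)
    have h1 : inv f ≫ f = 𝟙 (FDRep.of ρ) := IsIso.inv_hom_id f
    simp only [h0, Limits.comp_zero] at h1
    have h2 := congrArg Action.Hom.hom h1
    rw [Action.zero_hom, Action.id_hom] at h2
    have h3 := congrArg (fun k => k.hom.hom v) h2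
    simp at h3
    exact hv h3.symm
  · intro h0
    have hrange : ∀ g : G, ∀ v ∈ LinearMap.range φ, ρ g v ∈ LinearMap.range φ := by
      rintro g v ⟨y, rfl⟩
      exact ⟨Y.ρ g y, hcomm g y⟩
    have hker : ∀ g : G, ∀ y ∈ LinearMap.ker φ, Y.ρ g y ∈ LinearMap.ker φ := by
      intro g y hy
      rw [LinearMap.mem_ker] at hy ⊢
      rw [hcomm g y, hy, map_zero]
    have hsurj : Function.Surjective φ := by
      rw [← LinearMap.range_eq_top]
      rcases hirr _ hrange with h | h
      · exfalso
        apply h0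
        apply Action.Hom.ext
        rw [Action.zero_hom]
        ext y
        have : φ y ∈ LinearMap.range φ := ⟨y, rfl⟩
        rw [h] at this
        simpa using this
      · exact h
    have hinj : Function.Injective φ := by
      rw [← LinearMap.ker_eq_bot]
      set K := LinearMap.ker φ with hK
      let YK : FDRep ℂ G := FDRep.of (subRep Y.ρ K hker)
      let ι : YK ⟶ Y := ⟨FGModuleCat.ofHom K.subtype, by intro g; ext x; rfl⟩
      have hcomp : ι ≫ f = 0 ≫ f := by
        rw [Limits.zero_comp]
        apply Action.Hom.ext
        rw [Action.zero_hom, Action.comp_hom]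
        ext x
        exact x.2
      have hι0 : ι = 0 := (cancel_mono f).mp hcomp
      rw [eq_bot_iff]
      intro x hx
      have : K.subtype ⟨x, hx⟩ = 0 := by
        have h2 := congrArg Action.Hom.hom hι0
        rw [Action.zero_hom] at h2
        exact congrArg (fun k => k.hom.hom ⟨x, hx⟩) h2
      simpa using this
    let e := LinearEquiv.ofBijective φ ⟨hinj, hsurj⟩
    haveI : IsIso f.hom :=
      ⟨FGModuleCat.ofHom (e.symm : V →ₗ[ℂ] Y), by ext y; exact e.symm_apply_apply y,
        by ext v; exact e.apply_symm_apply v⟩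
    infer_instance

lemma trace_eq_add_of_isCompl {V : Type} [AddCommGroup V] [Module ℂ V] [FiniteDimensional ℂ V]
    {p q : Submodule ℂ V} (h : IsCompl p q) (f : V →ₗ[ℂ] V)
    (hp : ∀ v ∈ p, f v ∈ p) (hq : ∀ v ∈ q, f v ∈ q) :
    LinearMap.trace ℂ V f
      = LinearMap.trace ℂ p (f.restrict hp) + LinearMap.trace ℂ q (f.restrict hq) := by
  classical
  let N : Bool → Submodule ℂ V := fun b => cond b p q
  have huniv : (Set.univ : Set Bool) = {true, false} := by
    ext x; cases x <;> simp
  have hint : DirectSum.IsInternal N :=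
    (DirectSum.isInternal_submodule_iff_isCompl N (by simp) huniv).mpr (by simpa [N] using h)
  have hmaps : ∀ b, Set.MapsTo f (N b) (N b) := by
    rintro (_ | _) v hv
    · exact hq v hv
    · exact hp v hv
  have := LinearMap.trace_eq_sum_trace_restrict hint hmaps
  rw [this, Fintype.sum_bool]
  rfl
theorem decomp_aux {G : Type} [Group G] [Fintype G] :
    ∀ (N : ℕ) (V : Type) [AddCommGroup V] [Module ℂ V] [FiniteDimensional ℂ V],
      finrank ℂ V = N → ∀ ρ : Representation ℂ G V,
      ∃ (n : ℕ) (S : Fin n → FDRep ℂ G), (∀ i, Simple (S i)) ∧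
        ∀ g : G, LinearMap.trace ℂ V (ρ g) = ∑ i, (S i).character g := by
  intro N
  induction N using Nat.strong_induction_on with
  | _ N IH =>
    intro V _ _ _ hrank ρ
    rcases subsingleton_or_nontrivial V with hV | hV
    · refine ⟨0, fun i => i.elim0, fun i => i.elim0, fun g => ?_⟩
      have h0 : ρ g = 0 := Subsingleton.elim _ _
      rw [h0, map_zero]
      simp
    · by_cases hirr : ∀ p : Submodule ℂ V, (∀ g : G, ∀ v ∈ p, ρ g v ∈ p) → p = ⊥ ∨ p = ⊤
      · refine ⟨1, fun _ => FDRep.of ρ, fun _ => simple_of_irreducible ρ hirr, fun g => ?_⟩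
        rw [Fin.sum_univ_one]
        rfl
      · push_neg at hirr
        obtain ⟨p, hpinv, hpbot, hptop⟩ := hirr
        obtain ⟨q, hqinv, hcompl⟩ := exists_invariant_compl ρ p hpinv
        have hqtop : q ≠ ⊤ := by
          rintro rfl
          exact hpbot (disjoint_top.mp hcompl.disjoint)
        have h1 : finrank ℂ p < N := hrank ▸ Submodule.finrank_lt hptop
        have h2 : finrank ℂ q < N := hrank ▸ Submodule.finrank_lt hqtop
        obtain ⟨n1, S1, hS1, hsum1⟩ := IH _ h1 p rfl (subRep ρ p hpinv)
        obtain ⟨n2, S2, hS2, hsum2⟩ := IH _ h2 q rfl (subRep ρ q hqinv)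
        refine ⟨n1 + n2, Fin.append S1 S2, ?_, ?_⟩
        · intro i
          induction i using Fin.addCases with
          | left i => rw [Fin.append_left]; exact hS1 i
          | right j => rw [Fin.append_right]; exact hS2 j
        · intro g
          rw [Fin.sum_univ_add]
          simp only [Fin.append_left, Fin.append_right]
          rw [← hsum1 g, ← hsum2 g]
          exact trace_eq_add_of_isCompl hcompl (ρ g) (hpinv g) (hqinv g)

theorem decomp {G : Type} [Group G] [Fintype G] (W : FDRep ℂ G) :
    ∃ (n : ℕ) (S : Fin n → FDRep ℂ G), (∀ i, Simple (S i)) ∧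
      ∀ g : G, W.character g = ∑ i, (S i).character g :=
  decomp_aux (finrank ℂ W) W rfl W.ρ

lemma card_ne_zero' {G : Type} [Group G] [Fintype G] : (Fintype.card G : ℂ) ≠ 0 :=
  Nat.cast_ne_zero.mpr Fintype.card_ne_zero

open scoped Classical in
lemma orth {G : Type} [Group G] [Fintype G] (V W : FDRep ℂ G) [Simple V] [Simple W] :
    (Fintype.card G : ℂ)⁻¹ * ∑ g : G, V.character g * (starRingEnd ℂ) (W.character g)
      = if Nonempty (V ≅ W) then 1 else 0 := by
  classical
  letI : Invertible ((Nat.card G : ℂ)) :=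
    invertibleOfNonzero (by rw [Nat.card_eq_fintype_card]; exact card_ne_zero')
  have h := FDRep.char_orthonormal (k := ℂ) (G := G) V W
  rw [Nat.card_eq_fintype_card] at h
  simp only [← char_inv]
  exact h

open scoped Classical in
lemma char_eq_iff_iso {G : Type} [Group G] [Fintype G] (V W : FDRep ℂ G) [Simple V] [Simple W] :
    V.character = W.character ↔ Nonempty (V ≅ W) := by
  constructor
  · intro h
    by_contra hn
    have h1 := orth V W
    rw [if_neg hn, h] at h1
    have h2 := orth W W
    rw [if_pos ⟨Iso.refl W⟩] at h2
    exact zero_ne_one (h1.symm.trans h2)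
  · rintro ⟨i⟩
    exact FDRep.char_iso i

open scoped Classical in
lemma simple_char_one_ne_zero {G : Type} [Group G] [Fintype G] (V : FDRep ℂ G) [Simple V] :
    V.character 1 ≠ 0 := by
  intro h0
  rw [FDRep.char_one] at h0
  have hsub : Subsingleton V := finrank_zero_iff.mp (by exact_mod_cast h0)
  have hz : ∀ g : G, V.character g = 0 := by
    intro g
    show LinearMap.trace ℂ V (V.ρ g) = 0
    have h1 : V.ρ g = 0 := Subsingleton.elim _ _
    rw [h1, map_zero]
  have h1 := orth V V
  rw [if_pos ⟨Iso.refl V⟩] at h1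
  simp only [hz, zero_mul, map_zero, mul_zero, Finset.sum_const_zero] at h1
  exact zero_ne_one h1

open scoped Classical in
lemma orth' {G : Type} [Group G] [Fintype G] (V W : FDRep ℂ G) [Simple V] [Simple W] :
    (Fintype.card G : ℂ)⁻¹ * ∑ g : G, V.character g * (starRingEnd ℂ) (W.character g)
      = if V.character = W.character then 1 else 0 := by
  rw [orth V W]
  simp only [char_eq_iff_iso]

lemma irrChar_finite (G : Type) [Group G] [Fintype G] : {χ : G → ℂ | IsIrrChar G χ}.Finite := by
  classical
  rw [← Set.finite_coe_iff]
  have hcard : (Fintype.card G : ℂ) ≠ 0 := Nat.cast_ne_zero.mpr Fintype.card_ne_zero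
  set S := {χ : G → ℂ | IsIrrChar G χ} with hS
  let c : ℂ := ((Real.sqrt (Fintype.card G) : ℝ) : ℂ)⁻¹
  have hcc : c * c * (Fintype.card G : ℂ) = 1 := by
    have h1 : ((Real.sqrt (Fintype.card G) : ℝ) : ℂ) * ((Real.sqrt (Fintype.card G) : ℝ) : ℂ)
        = (Fintype.card G : ℂ) := by
      rw [← Complex.ofReal_mul, Real.mul_self_sqrt (Nat.cast_nonneg _)]
      norm_num
    rw [show c * c = (((Real.sqrt (Fintype.card G) : ℝ) : ℂ) *
      ((Real.sqrt (Fintype.card G) : ℝ) : ℂ))⁻¹ by rw [mul_inv]]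
    rw [h1, inv_mul_cancel₀ hcard]
  have hcconj : (starRingEnd ℂ) c = c := by
    rw [map_inv₀, Complex.conj_ofReal]
  let fE : S → EuclideanSpace ℂ G := fun χ => (WithLp.equiv 2 (G → ℂ)).symm (c • (χ : G → ℂ))
  have key : ∀ x y : G → ℂ,
      (inner ℂ ((WithLp.equiv 2 (G → ℂ)).symm x) ((WithLp.equiv 2 (G → ℂ)).symm y) : ℂ)
        = ∑ g : G, (starRingEnd ℂ) (x g) * y g := by
    intro x y
    rw [PiLp.inner_apply]
    simp [RCLike.inner_apply, mul_comm]
  have hon : Orthonormal ℂ fE := by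
    rw [orthonormal_iff_ite]
    intro i j
    obtain ⟨Vi, hVi, hχi⟩ := i.2
    obtain ⟨Vj, hVj, hχj⟩ := j.2
    haveI := hVi; haveI := hVj
    have hval : (inner ℂ ((i : G → ℂ) |> (WithLp.equiv 2 (G → ℂ)).symm)
        ((j : G → ℂ) |> (WithLp.equiv 2 (G → ℂ)).symm) : ℂ)
        = (Fintype.card G : ℂ) * (if Vj.character = Vi.character then 1 else 0) := by
      rw [key]
      have h2 := orth' Vj Vi
      have h3 : ∑ g : G, (starRingEnd ℂ) ((i : G → ℂ) g) * (j : G → ℂ) g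
          = ∑ g : G, Vj.character g * (starRingEnd ℂ) (Vi.character g) := by
        apply Finset.sum_congr rfl
        intro g _
        rw [← hχi, ← hχj]
        ring
      rw [h3, ← h2, ← mul_assoc, mul_inv_cancel₀ hcard, one_mul]
    have hsmul : (inner ℂ (fE i) (fE j) : ℂ) = c * c *
        (inner ℂ ((i : G → ℂ) |> (WithLp.equiv 2 (G → ℂ)).symm)
          ((j : G → ℂ) |> (WithLp.equiv 2 (G → ℂ)).symm) : ℂ) := by
      have : fE i = c • ((i : G → ℂ) |> (WithLp.equiv 2 (G → ℂ)).symm) := rfl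
      rw [this, show fE j = c • ((j : G → ℂ) |> (WithLp.equiv 2 (G → ℂ)).symm) from rfl,
        inner_smul_left, inner_smul_right, hcconj]
      ring
    rw [hsmul, hval]
    by_cases hij : i = j
    · subst hij
      rw [if_pos rfl, if_pos (by rw [← hχi, ← hχj])]
      rw [mul_one, hcc]
    · rw [if_neg hij, if_neg, mul_zero, mul_zero]
      intro hEq
      apply hij
      apply Subtype.ext
      rw [hχi, hχj, hEq]
  haveI : Finite ↥S := (hon.linearIndependent).finite
  exact inferInstance

/-- **Lemma (steinsat)**: `Σ_ρ L_τ(λ,ρ) W(ρ) = (χ^τ(C)/dim τ) W(λ)`, i.e. the exchangeable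
pair built from the Plancherel measure and the chain `L_τ` satisfies
`E(W'|W) = (χ^τ(C)/dim τ) W`. -/
theorem stmt4 {G : Type} [Group G] [Fintype G] (C : Set G) (hC : IsConjClass C)
    (hCinv : C⁻¹ = C) (c : G) (hc : c ∈ C)
    (τ : G → ℂ) (hτ : IsIrrChar G τ) (hτnt : τ ≠ fun _ => 1) (hτre : ∀ g : G, (τ g).im = 0)
    (lam : G → ℂ) (hlam : IsIrrChar G lam) :
    (∑ᶠ ρ ∈ {ρ : G → ℂ | IsIrrChar G ρ}, Lchain τ lam ρ * Wstat C c ρ) =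
      τ c / τ 1 * Wstat C c lam := by
  classical
  have hfin := irrChar_finite G
  have hSc : {ρ : G → ℂ | IsIrrChar G ρ} = ↑hfin.toFinset := hfin.coe_toFinset.symm
  rw [hSc, finsum_mem_coe_finset]
  obtain ⟨Vl, hVl, hlamc⟩ := hlam
  obtain ⟨Vt, hVt, htauc⟩ := hτ
  haveI := hVl; haveI := hVt
  have hlam1 : lam 1 ≠ 0 := by rw [hlamc]; exact simple_char_one_ne_zero Vl
  have htau1 : τ 1 ≠ 0 := by rw [htauc]; exact simple_char_one_ne_zero Vt
  obtain ⟨n, Si, hSi, hsum⟩ := decomp (Vl ⊗ Vt)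
  have hdecomp : ∀ g : G, lam g * τ g = ∑ i, (Si i).character g := by
    intro g
    have h1 := hsum g
    rw [FDRep.char_tensor, Pi.mul_apply] at h1
    rw [hlamc, htauc]
    exact h1
  set r : ℂ := ((Real.sqrt (Set.ncard C) : ℝ) : ℂ) with hr
  have hterm : ∀ ρ ∈ hfin.toFinset, Lchain τ lam ρ * Wstat C c ρ
      = ∑ i, (if (Si i).character = ρ then (1:ℂ) else 0) * (r * ρ c / (lam 1 * τ 1)) := by
    intro ρ hρ
    obtain ⟨W, hW, hρc⟩ := hfin.mem_toFinset.mp hρ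
    haveI := hW
    have hρ1 : ρ 1 ≠ 0 := by rw [hρc]; exact simple_char_one_ne_zero W
    have hM : (Fintype.card G : ℂ)⁻¹ * ∑ g : G, lam g * τ g * (starRingEnd ℂ) (ρ g)
        = ∑ i, (if (Si i).character = ρ then (1:ℂ) else 0) := by
      have h2 : ∑ g : G, lam g * τ g * (starRingEnd ℂ) (ρ g)
          = ∑ i, ∑ g : G, (Si i).character g * (starRingEnd ℂ) (ρ g) := by
        rw [Finset.sum_comm]
        apply Finset.sum_congr rfl
        intro g _
        rw [hdecomp g, Finset.sum_mul]
      rw [h2, Finset.mul_sum]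
      apply Finset.sum_congr rfl
      intro i _
      haveI := hSi i
      have h3 := orth' (Si i) W
      rw [hρc]
      exact h3
    show ρ 1 / (lam 1 * τ 1) * ((Fintype.card G : ℂ)⁻¹ *
        ∑ g : G, lam g * τ g * (starRingEnd ℂ) (ρ g)) * (r * ρ c / ρ 1) = _
    rw [hM, ← Finset.sum_mul]
    set M := ∑ i, (if (Si i).character = ρ then (1:ℂ) else 0)
    field_simp
  rw [Finset.sum_congr rfl hterm, Finset.sum_comm]
  have hinner : ∀ i : Fin n, ∑ ρ ∈ hfin.toFinset,
      (if (Si i).character = ρ then (1:ℂ) else 0) * (r * ρ c / (lam 1 * τ 1))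
      = r * (Si i).character c / (lam 1 * τ 1) := by
    intro i
    haveI := hSi i
    rw [Finset.sum_eq_single ((Si i).character)]
    · rw [if_pos rfl, one_mul]
    · intro ρ _ hne
      rw [if_neg (fun h => hne h.symm), zero_mul]
    · intro hmem
      exfalso
      exact hmem (hfin.mem_toFinset.mpr ⟨Si i, hSi i, rfl⟩)
  rw [Finset.sum_congr rfl (fun i _ => hinner i)]
  have hfinal : ∑ i : Fin n, r * (Si i).character c / (lam 1 * τ 1)
      = r * (lam c * τ c) / (lam 1 * τ 1) := by
    rw [← Finset.sum_div, ← Finset.mul_sum, ← hdecomp c]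
  rw [hfinal]
  show _ = τ c / τ 1 * (r * lam c / lam 1)
  field_simp

end Aux
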